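/- For a smooth metric g of Kundt shape on ℝ^n, define I₁(g)(p) = Σ_{i,j=1}^{n-2} ∂_v g_{u x^i}(p) · ∂_v g_{u x^j}(p) · (h(p)^{-1})_{ij}, where h(p) is the positive definite block (g(p)_{x^i x^j}). Then I₁ is a first-order differential invariant of the shape-preserving pseudogroup: for every shape transformation φ and every smooth metric g of Kundt shape, I₁(φ*g)(p) = I₁(g)(φ(p)) for all p ∈ ℝ^n (Proposition on the first-order invariant I₁ = ‖w‖²_g with w = (W_i)_v dx^i). -/

import Mathlib

open Matrix

noncomputable section

/-- We work on `ℝ^(n+3)` (so the dimension is an arbitrary integer `≥ 3`), with coordinates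
`(u, x^1, …, x^{n+1}, v)`. Index of the coordinate `u`. -/
def uIdx (n : ℕ) : Fin (n + 3) := 0

/-- Index of the coordinate `v`. -/
def vIdx (n : ℕ) : Fin (n + 3) := Fin.last (n + 2)

/-- Index of the coordinate `x^i`. -/
def xIdx (n : ℕ) (i : Fin (n + 1)) : Fin (n + 3) := ⟨i.val + 1, by omega⟩

/-- Partial derivative of a scalar function `f` on `ℝ^(n+3)` in the `j`-th coordinate at `p`. -/
def partialDeriv' (n : ℕ) (f : (Fin (n + 3) → ℝ) → ℝ) (j : Fin (n + 3))
    (p : Fin (n + 3) → ℝ) : ℝ :=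
  deriv (fun t => f (Function.update p j t)) (p j)

/-- A smooth metric of Kundt shape on `ℝ^(n+3)`. -/
structure IsKundtShape (n : ℕ)
    (g : (Fin (n + 3) → ℝ) → Matrix (Fin (n + 3)) (Fin (n + 3)) ℝ) : Prop where
  smooth : ∀ i j, ContDiff ℝ (⊤ : ℕ∞) fun p => g p i j
  symm : ∀ p, (g p).IsSymm
  vv : ∀ p, g p (vIdx n) (vIdx n) = 0
  xv : ∀ p i, g p (xIdx n i) (vIdx n) = 0
  uv : ∀ p, g p (uIdx n) (vIdx n) = 1
  posDef : ∀ p, (Matrix.of fun i j : Fin (n + 1) => g p (xIdx n i) (xIdx n j)).PosDef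
  vIndep : ∀ p i j, partialDeriv' n (fun q => g q (xIdx n i) (xIdx n j)) (vIdx n) p = 0

/-- A shape transformation `φ(u,x,v) = (C(u), A(u,x), v/C'(u) + B(u,x))`. -/
def IsShapeTransform (n : ℕ) (φ : (Fin (n + 3) → ℝ) → Fin (n + 3) → ℝ) : Prop :=
  ∃ (C : ℝ → ℝ) (A : ℝ → (Fin (n + 1) → ℝ) → Fin (n + 1) → ℝ) (B : ℝ → (Fin (n + 1) → ℝ) → ℝ),
    ContDiff ℝ (⊤ : ℕ∞) C ∧
    (∀ i, ContDiff ℝ (⊤ : ℕ∞) fun q : ℝ × (Fin (n + 1) → ℝ) => A q.1 q.2 i) ∧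
    ContDiff ℝ (⊤ : ℕ∞) (fun q : ℝ × (Fin (n + 1) → ℝ) => B q.1 q.2) ∧
    (∀ u, deriv C u ≠ 0) ∧
    (∀ u x, IsUnit (Matrix.of fun i j : Fin (n + 1) =>
        deriv (fun t => A u (Function.update x j t) i) (x j))) ∧
    (∀ p, φ p (uIdx n) = C (p (uIdx n))) ∧
    (∀ p i, φ p (xIdx n i) = A (p (uIdx n)) (fun j => p (xIdx n j)) i) ∧
    (∀ p, φ p (vIdx n) =
      p (vIdx n) / deriv C (p (uIdx n)) + B (p (uIdx n)) (fun j => p (xIdx n j)))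

/-- The Jacobian matrix `Dφ_p` of `φ` at `p`. -/
def jacobianMatrix (n : ℕ) (φ : (Fin (n + 3) → ℝ) → Fin (n + 3) → ℝ)
    (p : Fin (n + 3) → ℝ) : Matrix (Fin (n + 3)) (Fin (n + 3)) ℝ :=
  Matrix.of fun i j => partialDeriv' n (fun q => φ q i) j p

/-- The pullback metric `(φ*g)(p) = (Dφ_p)ᵀ · g(φ(p)) · Dφ_p`. -/
def pullbackMetric (n : ℕ) (φ : (Fin (n + 3) → ℝ) → Fin (n + 3) → ℝ)
    (g : (Fin (n + 3) → ℝ) → Matrix (Fin (n + 3)) (Fin (n + 3)) ℝ)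
    (p : Fin (n + 3) → ℝ) : Matrix (Fin (n + 3)) (Fin (n + 3)) ℝ :=
  (jacobianMatrix n φ p)ᵀ * g (φ p) * jacobianMatrix n φ p

/-- The first-order invariant `I₁(g)(p) = Σ_{i,j} ∂_v g_{u x^i}(p) ∂_v g_{u x^j}(p) (h(p)⁻¹)_{ij}`,
where `h(p)` is the positive definite block `(g(p)_{x^i x^j})`. -/
def I₁ (n : ℕ) (g : (Fin (n + 3) → ℝ) → Matrix (Fin (n + 3)) (Fin (n + 3)) ℝ)
    (p : Fin (n + 3) → ℝ) : ℝ :=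
  ∑ i : Fin (n + 1), ∑ j : Fin (n + 1),
    partialDeriv' n (fun q => g q (uIdx n) (xIdx n i)) (vIdx n) p *
    partialDeriv' n (fun q => g q (uIdx n) (xIdx n j)) (vIdx n) p *
    (Matrix.of fun a b : Fin (n + 1) => g p (xIdx n a) (xIdx n b))⁻¹ i j

namespace KundtAux
variable {n : ℕ}

lemma uIdx_ne_vIdx : uIdx n ≠ vIdx n := by
  simp [uIdx, vIdx, Fin.ext_iff]

lemma xIdx_ne_uIdx (i : Fin (n+1)) : xIdx n i ≠ uIdx n := by
  intro h; have h' : (xIdx n i).val = (uIdx n).val := congrArg Fin.val h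
  rw [uIdx, Fin.val_zero] at h'; exact Nat.succ_ne_zero _ h'

lemma xIdx_ne_vIdx (i : Fin (n+1)) : xIdx n i ≠ vIdx n := by
  simp [vIdx, xIdx, Fin.ext_iff]; omega

lemma xIdx_inj {i j : Fin (n+1)} (h : xIdx n i = xIdx n j) : i = j := by
  simpa [xIdx, Fin.ext_iff] using h

lemma sum_split (f : Fin (n + 3) → ℝ) :
    ∑ a, f a = f (uIdx n) + (∑ i : Fin (n + 1), f (xIdx n i)) + f (vIdx n) := by
  rw [Fin.sum_univ_succ, Fin.sum_univ_castSucc]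
  have h1 : ∀ i : Fin (n+1), (Fin.castSucc i).succ = xIdx n i := by
    intro i; simp [xIdx, Fin.ext_iff]
  have h2 : (Fin.last (n+1)).succ = vIdx n := by
    simp [vIdx, Fin.ext_iff]
  have h3 : (0 : Fin (n+3)) = uIdx n := rfl
  rw [h2, h3]
  simp only [h1]
  ring

lemma idx_cases (a : Fin (n+3)) :
    a = uIdx n ∨ (∃ i : Fin (n+1), a = xIdx n i) ∨ a = vIdx n := by
  rcases a with ⟨a, ha⟩
  rcases Nat.lt_or_ge a 1 with h | h
  · left; simp [uIdx, Fin.ext_iff]; omega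
  rcases Nat.lt_or_ge a (n+2) with h2 | h2
  · exact Or.inr (Or.inl ⟨⟨a-1, by omega⟩, by simp [xIdx, Fin.ext_iff]; omega⟩)
  · right; right; simp [vIdx, Fin.ext_iff]; omega

lemma update_x_apply (q : Fin (n+3) → ℝ) (j k : Fin (n+1)) (s : ℝ) :
    Function.update q (xIdx n j) s (xIdx n k)
      = Function.update (fun m => q (xIdx n m)) j s k := by
  rcases eq_or_ne k j with rfl | hk
  · simp
  · rw [Function.update_of_ne (fun h => hk (xIdx_inj h)), Function.update_of_ne hk]

lemma dot_sum (m : ℕ) (x y : Fin m → ℝ) (N : Matrix (Fin m) (Fin m) ℝ) :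
    ∑ i, ∑ j, x i * y j * N i j = x ⬝ᵥ (N *ᵥ y) := by
  simp only [dotProduct, mulVec, Finset.mul_sum]
  refine Finset.sum_congr rfl fun i _ => Finset.sum_congr rfl fun j _ => by ring

lemma invariant_algebra (m : ℕ) (M H : Matrix (Fin m) (Fin m) ℝ) (w : Fin m → ℝ)
    (hM : IsUnit M.det) (hH : IsUnit H.det) :
    ∑ i, ∑ j, (∑ k, w k * M k i) * (∑ k, w k * M k j) * (Mᵀ * H * M)⁻¹ i j
      = ∑ i, ∑ j, w i * w j * H⁻¹ i j := by
  have hMt : IsUnit (Mᵀ).det := by rwa [Matrix.det_transpose]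
  have hw : ∀ i, (∑ k, w k * M k i) = (Mᵀ *ᵥ w) i := by
    intro i; simp [Matrix.mulVec, dotProduct, mul_comm]
  simp only [hw]
  rw [dot_sum, dot_sum]
  rw [Matrix.mul_inv_rev, Matrix.mul_inv_rev]
  have e1 : (M⁻¹ * (H⁻¹ * (Mᵀ)⁻¹)) *ᵥ (Mᵀ *ᵥ w) = (M⁻¹ * H⁻¹) *ᵥ w := by
    rw [Matrix.mulVec_mulVec]
    congr 1
    rw [Matrix.mul_assoc, Matrix.mul_assoc, Matrix.nonsing_inv_mul _ hMt, Matrix.mul_one]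
  rw [e1, Matrix.mulVec_transpose, ← Matrix.dotProduct_mulVec,
    Matrix.mulVec_mulVec, ← Matrix.mul_assoc, Matrix.mul_nonsing_inv _ hM, Matrix.one_mul]

end KundtAux

open KundtAux

/-- **Proposition.** `I₁ = ‖w‖²_g`, with `w = (W_i)_v dx^i`, is a first-order differential
invariant of the shape-preserving pseudogroup. -/
theorem I₁_is_invariant (n : ℕ)
    (φ : (Fin (n + 3) → ℝ) → Fin (n + 3) → ℝ)
    (g : (Fin (n + 3) → ℝ) → Matrix (Fin (n + 3)) (Fin (n + 3)) ℝ)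
    (hφ : IsShapeTransform n φ) (hg : IsKundtShape n g) :
    ∀ p : Fin (n + 3) → ℝ, I₁ n (pullbackMetric n φ g) p = I₁ n g (φ p) := by
  obtain ⟨C, A, B, hC, hA, hB, hC', hAinv, huφ, hxφ, hvφ⟩ := hφ
  intro p
  set u0 : ℝ := p (uIdx n) with hu0
  set x0 : Fin (n+1) → ℝ := fun j => p (xIdx n j) with hx0
  set v0 : ℝ := p (vIdx n) with hv0
  set c : ℝ := deriv C u0 with hcdef
  have hc : c ≠ 0 := hC' u0
  set M : Matrix (Fin (n+1)) (Fin (n+1)) ℝ :=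
    Matrix.of (fun i j => deriv (fun t => A u0 (Function.update x0 j t) i) (x0 j)) with hMdef
  have hMunit : IsUnit M := hAinv u0 x0
  set P : Fin (n+3) → ℝ := φ p with hPdef
  set H : Matrix (Fin (n+1)) (Fin (n+1)) ℝ :=
    Matrix.of (fun k l => g P (xIdx n k) (xIdx n l)) with hHdef
  set w : Fin (n+1) → ℝ :=
    fun k => partialDeriv' n (fun q => g q (uIdx n) (xIdx n k)) (vIdx n) P with hwdef
  set a : Fin (n+1) → ℝ := fun k => deriv (fun t => A t x0 k) u0 with hadef
  set b : Fin (n+1) → ℝ :=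
    fun j => deriv (fun t => B u0 (Function.update x0 j t)) (x0 j) with hbdef
  set B0 : ℝ := B u0 x0 with hB0def
  set Q : ℝ → (Fin (n+3) → ℝ) := fun t => Function.update p (vIdx n) t with hQdef
  -- coordinates of Q t
  have hQu : ∀ t, Q t (uIdx n) = u0 := fun t => Function.update_of_ne uIdx_ne_vIdx _ _
  have hQx : ∀ t k, Q t (xIdx n k) = x0 k := fun t k =>
    Function.update_of_ne (xIdx_ne_vIdx k) _ _
  have hQxf : ∀ t, (fun k => Q t (xIdx n k)) = x0 := fun t => funext (hQx t)
  have hQv : ∀ t, Q t (vIdx n) = t := fun t => Function.update_self _ _ _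
  have hupd : ∀ t (j : Fin (n+1)) (s : ℝ),
      (fun k => Function.update (Q t) (xIdx n j) s (xIdx n k)) = Function.update x0 j s := by
    intro t j s; funext k; rw [update_x_apply, hQxf]
  -- Jacobian entries at Q t
  have hJuu : ∀ t, jacobianMatrix n φ (Q t) (uIdx n) (uIdx n) = c := by
    intro t
    show deriv (fun s => φ (Function.update (Q t) (uIdx n) s) (uIdx n)) (Q t (uIdx n)) = c
    have : (fun s => φ (Function.update (Q t) (uIdx n) s) (uIdx n)) = C := by
      funext s; rw [huφ, Function.update_self]
    rw [this, hQu]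
  have hJux : ∀ t (j : Fin (n+1)),
      jacobianMatrix n φ (Q t) (uIdx n) (xIdx n j) = 0 := by
    intro t j
    show deriv (fun s => φ (Function.update (Q t) (xIdx n j) s) (uIdx n)) _ = 0
    have : (fun s => φ (Function.update (Q t) (xIdx n j) s) (uIdx n))
        = fun _ => C (Q t (uIdx n)) := by
      funext s; rw [huφ, Function.update_of_ne (Ne.symm (xIdx_ne_uIdx j))]
    rw [this, deriv_const]
  have hJxu : ∀ t (i : Fin (n+1)),
      jacobianMatrix n φ (Q t) (xIdx n i) (uIdx n) = a i := by
    intro t i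
    show deriv (fun s => φ (Function.update (Q t) (uIdx n) s) (xIdx n i)) (Q t (uIdx n)) = a i
    have : (fun s => φ (Function.update (Q t) (uIdx n) s) (xIdx n i))
        = fun s => A s x0 i := by
      funext s
      rw [hxφ, Function.update_self]
      congr 1
      funext k
      rw [Function.update_of_ne (xIdx_ne_uIdx k), hQx]
    rw [this, hQu, hadef]
  have hJxx : ∀ t (i j : Fin (n+1)),
      jacobianMatrix n φ (Q t) (xIdx n i) (xIdx n j) = M i j := by
    intro t i j
    show deriv (fun s => φ (Function.update (Q t) (xIdx n j) s) (xIdx n i)) (Q t (xIdx n j)) = M i j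
    have : (fun s => φ (Function.update (Q t) (xIdx n j) s) (xIdx n i))
        = fun s => A u0 (Function.update x0 j s) i := by
      funext s
      rw [hxφ, Function.update_of_ne (Ne.symm (xIdx_ne_uIdx j)), hQu, hupd]
    rw [this, hQx]
    rfl
  have hJvx : ∀ t (j : Fin (n+1)),
      jacobianMatrix n φ (Q t) (vIdx n) (xIdx n j) = b j := by
    intro t j
    show deriv (fun s => φ (Function.update (Q t) (xIdx n j) s) (vIdx n)) (Q t (xIdx n j)) = b j
    have : (fun s => φ (Function.update (Q t) (xIdx n j) s) (vIdx n))
        = fun s => Q t (vIdx n) / deriv C u0 + B u0 (Function.update x0 j s) := by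
      funext s
      rw [hvφ, Function.update_of_ne (Ne.symm (xIdx_ne_vIdx j)),
        Function.update_of_ne (Ne.symm (xIdx_ne_uIdx j)), hQu, hupd]
    rw [this, hQx]
    simp only [deriv_const_add]
    rfl
  -- φ ∘ Q
  have hφQ : ∀ t, φ (Q t) = Function.update P (vIdx n) (t / c + B0) := by
    intro t
    funext d
    rcases idx_cases d with rfl | ⟨i, rfl⟩ | rfl
    · rw [huφ, hQu, Function.update_of_ne uIdx_ne_vIdx, hPdef, huφ, ← hu0]
    · rw [hxφ, hQu, hQxf, Function.update_of_ne (xIdx_ne_vIdx i), hPdef, hxφ, ← hu0, ← hx0]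
    · rw [hvφ, hQu, hQxf, hQv, Function.update_self, ← hcdef, ← hB0def]
  have hPv : P (vIdx n) = v0 / c + B0 := by
    rw [hPdef, hvφ, ← hu0, ← hx0, ← hv0, ← hcdef, ← hB0def]
  -- differentiability of g entries along the v-line
  have hdiffG : ∀ (i j : Fin (n+3)),
      Differentiable ℝ (fun s => g (Function.update P (vIdx n) s) i j) := by
    intro i j
    exact ((hg.smooth i j).differentiable (by simp)).comp
      ((contDiff_update ⊤ P (vIdx n)).differentiable (by simp))
  -- the x-block of g is constant along the v-line
  have hHconst : ∀ (s : ℝ) (k l : Fin (n+1)),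
      g (Function.update P (vIdx n) s) (xIdx n k) (xIdx n l) = H k l := by
    intro s k l
    have h0 : ∀ s', deriv (fun s'' => g (Function.update P (vIdx n) s'')
        (xIdx n k) (xIdx n l)) s' = 0 := by
      intro s'
      have h := hg.vIndep (Function.update P (vIdx n) s') k l
      simpa [partialDeriv', Function.update_idem] using h
    have h := is_const_of_deriv_eq_zero (hdiffG _ _) h0 s (P (vIdx n))
    rw [h, Function.update_eq_self]
    rfl
  -- derivative of the u-x components along the transformed v-line
  have hw' : ∀ l : Fin (n+1),
      HasDerivAt (fun t => g (Function.update P (vIdx n) (t / c + B0)) (uIdx n) (xIdx n l))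
        (w l * (1/c)) v0 := by
    intro l
    have h1 : HasDerivAt (fun s => g (Function.update P (vIdx n) s) (uIdx n) (xIdx n l))
        (w l) (v0 / c + B0) := by
      rw [← hPv]
      exact (hdiffG (uIdx n) (xIdx n l) (P (vIdx n))).hasDerivAt
    have hι : HasDerivAt (fun t : ℝ => t / c + B0) (1/c) v0 :=
      ((hasDerivAt_id v0).div_const c).add_const B0
    simpa [Function.comp_def] using h1.comp v0 hι
  -- expansion of the pullback metric
  have expand : ∀ q (a' b' : Fin (n+3)), pullbackMetric n φ g q a' b' =
      ∑ d, ∑ e, jacobianMatrix n φ q d a' * g (φ q) d e * jacobianMatrix n φ q e b' := by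
    intro q a' b'
    simp only [pullbackMetric, Matrix.mul_apply, Matrix.transpose_apply, Finset.sum_mul]
    exact Finset.sum_comm
  have gvx : ∀ q (l : Fin (n+1)), g q (vIdx n) (xIdx n l) = 0 := fun q l =>
    ((hg.symm q).apply (xIdx n l) (vIdx n)).trans (hg.xv q l)
  -- the x-block of the pullback
  have key2 : ∀ (t : ℝ) (i j : Fin (n+1)),
      pullbackMetric n φ g (Q t) (xIdx n i) (xIdx n j)
        = ∑ k, ∑ l, M k i * H k l * M l j := by
    intro t i j
    rw [expand, sum_split]
    simp only [sum_split, hJux, hJxx, hJvx, hφQ, hHconst, hg.vv, hg.xv, hg.uv, gvx,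
      mul_zero, zero_mul, mul_one, add_zero, zero_add, Finset.sum_const_zero]
  -- the u-x components of the pullback
  have key1 : ∀ (t : ℝ) (i : Fin (n+1)),
      pullbackMetric n φ g (Q t) (uIdx n) (xIdx n i)
        = c * (∑ l, g (Function.update P (vIdx n) (t / c + B0)) (uIdx n) (xIdx n l) * M l i)
          + (c * b i + ∑ k, a k * ∑ l, H k l * M l i) := by
    intro t i
    rw [expand, sum_split]
    simp only [sum_split, hJuu, hJux, hJxu, hJxx, hJvx, hφQ, hHconst, hg.vv, hg.xv, hg.uv,
      gvx, mul_zero, zero_mul, mul_one, add_zero, zero_add, Finset.sum_const_zero,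
      Finset.mul_sum, mul_assoc, add_assoc, one_mul]
  -- the v-derivative of the u-x components of the pullback
  have hDv : ∀ i : Fin (n+1),
      partialDeriv' n (fun q => pullbackMetric n φ g q (uIdx n) (xIdx n i)) (vIdx n) p
        = ∑ l, w l * M l i := by
    intro i
    have hfun : (fun t => pullbackMetric n φ g (Q t) (uIdx n) (xIdx n i))
        = fun t => c * (∑ l, g (Function.update P (vIdx n) (t / c + B0)) (uIdx n)
            (xIdx n l) * M l i) + (c * b i + ∑ k, a k * ∑ l, H k l * M l i) :=
      funext fun t => key1 t i
    show deriv (fun t => pullbackMetric n φ g (Q t) (uIdx n) (xIdx n i)) v0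
      = ∑ l, w l * M l i
    rw [hfun]
    have hd : HasDerivAt (fun t => c * (∑ l, g (Function.update P (vIdx n) (t / c + B0))
          (uIdx n) (xIdx n l) * M l i) + (c * b i + ∑ k, a k * ∑ l, H k l * M l i))
        (c * ∑ l, (w l * (1/c)) * M l i) v0 :=
      (HasDerivAt.const_mul c (HasDerivAt.fun_sum fun l _ => (hw' l).mul_const (M l i))).add_const _
    rw [hd.deriv, Finset.mul_sum]
    refine Finset.sum_congr rfl fun l _ => ?_
    field_simp
  -- the x-block of the pullback as a matrix product
  have hblock : (Matrix.of fun a' b' : Fin (n+1) =>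
      pullbackMetric n φ g p (xIdx n a') (xIdx n b')) = Mᵀ * H * M := by
    ext a' b'
    have h := key2 v0 a' b'
    rw [show Q v0 = p from Function.update_eq_self _ _] at h
    rw [Matrix.of_apply, h]
    simp only [Matrix.mul_apply, Matrix.transpose_apply, Finset.sum_mul]
    rw [Finset.sum_comm]
  have hMdet : IsUnit M.det := (Matrix.isUnit_iff_isUnit_det M).mp hMunit
  have hHdet : IsUnit H.det := by
    have hpd : H.PosDef := hg.posDef P
    exact isUnit_iff_ne_zero.mpr (ne_of_gt hpd.det_pos)
  show I₁ n (pullbackMetric n φ g) p = I₁ n g P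
  simp only [I₁]
  calc ∑ i : Fin (n+1), ∑ j : Fin (n+1),
        partialDeriv' n (fun q => pullbackMetric n φ g q (uIdx n) (xIdx n i)) (vIdx n) p *
        partialDeriv' n (fun q => pullbackMetric n φ g q (uIdx n) (xIdx n j)) (vIdx n) p *
        (Matrix.of fun a' b' : Fin (n+1) =>
          pullbackMetric n φ g p (xIdx n a') (xIdx n b'))⁻¹ i j
      = ∑ i, ∑ j, (∑ k, w k * M k i) * (∑ k, w k * M k j) * (Mᵀ * H * M)⁻¹ i j := by
        simp only [hDv, hblock]
    _ = ∑ i, ∑ j, w i * w j * H⁻¹ i j := invariant_algebra _ M H w hMdet hHdet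
    _ = ∑ i : Fin (n+1), ∑ j : Fin (n+1),
        partialDeriv' n (fun q => g q (uIdx n) (xIdx n i)) (vIdx n) P *
        partialDeriv' n (fun q => g q (uIdx n) (xIdx n j)) (vIdx n) P *
        (Matrix.of fun a' b' : Fin (n+1) => g P (xIdx n a') (xIdx n b'))⁻¹ i j := rfl
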